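/- The monic Meixner polynomials satisfy the convolution identity 𝒮_n(x+y; a+b; p) = Σ_{k=0}^n C(n,k) 𝒮_k(x; a; p) 𝒮_{n-k}(y; b; p) for all x, y ∈ ℕ, a, b > 0, p ∈ (0,1), and n ∈ ℕ. -/

import Mathlib

/-- Rising factorial (Pochhammer symbol) `(a)^{(k)} = a(a+1)⋯(a+k-1)`. -/
noncomputable def risingFact (a : ℝ) (k : ℕ) : ℝ := ∏ i ∈ Finset.range k, (a + i)

/-- The monic Meixner polynomial
`𝒮_n(x;a;p) = ∑_{k=0}^n C(n,k) (1-1/p)^{k-n} (a+k)^{(n-k)} (x)_k`. -/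
noncomputable def meixner (n : ℕ) (a p : ℝ) (x : ℕ) : ℝ :=
  ∑ k ∈ Finset.range (n + 1),
    (n.choose k : ℝ) * (1 - 1 / p) ^ ((k : ℤ) - (n : ℤ)) *
      risingFact (a + k) (n - k) * (x.descFactorial k : ℝ)

open Finset

lemma risingFact_succ (a : ℝ) (k : ℕ) :
    risingFact a (k + 1) = risingFact a k * (a + k) := by
  simp [risingFact, Finset.prod_range_succ]

lemma risingFact_add_eq (u v : ℝ) (m : ℕ) :
    risingFact (u + v) m
      = ∑ i ∈ Finset.range (m + 1),
          (m.choose i : ℝ) * risingFact u i * risingFact v (m - i) := by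
  induction m with
  | zero => simp [risingFact]
  | succ m ih =>
    rw [risingFact_succ, ih, Finset.sum_mul]
    have key : ∀ i ∈ Finset.range (m + 1),
        (m.choose i : ℝ) * risingFact u i * risingFact v (m - i) * (u + v + m)
          = (m.choose i : ℝ) * risingFact u (i + 1) * risingFact v (m - i)
            + (m.choose i : ℝ) * risingFact u i * risingFact v (m + 1 - i) := by
      intro i hi
      rw [Finset.mem_range, Nat.lt_succ_iff] at hi
      have h2 : m + 1 - i = (m - i) + 1 := by omega
      have h1 : ((m - i : ℕ) : ℝ) = (m : ℝ) - (i : ℝ) := Nat.cast_sub hi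
      rw [h2, risingFact_succ, risingFact_succ, h1]
      ring
    rw [Finset.sum_congr rfl key, Finset.sum_add_distrib]
    have e1 : ∑ i ∈ range (m+2), ((m+1).choose i : ℝ) * risingFact u i * risingFact v (m+1-i)
        = ((∑ i ∈ range (m+1), (m.choose i : ℝ) * risingFact u (i+1) * risingFact v (m-i))
          + (∑ i ∈ range (m+1), (m.choose (i+1) : ℝ) * risingFact u (i+1) * risingFact v (m-i)))
          + risingFact u 0 * risingFact v (m+1) := by
      rw [Finset.sum_range_succ']
      simp only [Nat.choose_succ_succ, Nat.cast_add, Nat.succ_sub_succ_eq_sub,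
        Nat.choose_zero_right, Nat.cast_one, one_mul, Nat.sub_zero, add_mul]
      rw [Finset.sum_add_distrib]
    have e2 : ∑ i ∈ range (m+1), (m.choose i : ℝ) * risingFact u i * risingFact v (m+1-i)
        = (∑ i ∈ range (m+1), (m.choose (i+1) : ℝ) * risingFact u (i+1) * risingFact v (m-i))
          + risingFact u 0 * risingFact v (m+1) := by
      have h3 := Finset.sum_range_succ' (fun i => (m.choose i : ℝ) * risingFact u i * risingFact v (m+1-i)) (m+1)
      rw [Finset.sum_range_succ] at h3
      simp only [Nat.choose_succ_self, Nat.cast_zero, zero_mul, add_zero,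
        Nat.succ_sub_succ_eq_sub, Nat.sub_zero] at h3
      simpa using h3
    rw [e1, e2, ← add_assoc]

lemma descFact_add_eq (x y k : ℕ) :
    ((x + y).descFactorial k : ℝ)
      = ∑ j ∈ Finset.range (k + 1),
          (k.choose j : ℝ) * (x.descFactorial j : ℝ) * (y.descFactorial (k - j) : ℝ) := by
  have hnat : (x + y).descFactorial k
      = ∑ j ∈ Finset.range (k + 1),
          k.choose j * x.descFactorial j * y.descFactorial (k - j) := by
    rw [Nat.descFactorial_eq_factorial_mul_choose, Nat.add_choose_eq, Finset.mul_sum,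
      Finset.Nat.sum_antidiagonal_eq_sum_range_succ_mk]
    refine Finset.sum_congr rfl fun j hj => ?_
    rw [Finset.mem_range, Nat.lt_succ_iff] at hj
    rw [Nat.descFactorial_eq_factorial_mul_choose, Nat.descFactorial_eq_factorial_mul_choose]
    rw [← Nat.choose_mul_factorial_mul_factorial hj]
    ring
  rw [hnat]
  push_cast
  ring

lemma choose_swap (n j l i : ℕ) (h : j + l + i ≤ n) :
    ((n.choose (j + l) : ℝ) * ((j + l).choose j : ℝ) * ((n - (j + l)).choose i : ℝ))
      = (n.choose (j + i) : ℝ) * ((j + i).choose j : ℝ) * ((n - (j + i)).choose l : ℝ) := by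
  obtain ⟨r, rfl⟩ : ∃ r, n = j + l + i + r := ⟨n - (j + l + i), by omega⟩
  rw [show j + l + i + r - (j + l) = i + r by omega, show j + l + i + r - (j + i) = l + r by omega]
  rw [Nat.cast_choose ℝ (show j + l ≤ j + l + i + r by omega),
    Nat.cast_choose ℝ (show j ≤ j + l by omega),
    Nat.cast_choose ℝ (show i ≤ i + r by omega),
    Nat.cast_choose ℝ (show j + i ≤ j + l + i + r by omega),
    Nat.cast_choose ℝ (show j ≤ j + i by omega),
    Nat.cast_choose ℝ (show l ≤ l + r by omega)]
  rw [show j + l + i + r - (j + l) = i + r by omega, show j + l - j = l by omega,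
    show i + r - i = r by omega, show j + l + i + r - (j + i) = l + r by omega,
    show j + i - j = i by omega, show l + r - l = r by omega]
  have h1 := Nat.factorial_ne_zero j
  have h2 := Nat.factorial_ne_zero l
  have h3 := Nat.factorial_ne_zero i
  have h4 := Nat.factorial_ne_zero r
  have h5 := Nat.factorial_ne_zero (j + l)
  have h6 := Nat.factorial_ne_zero (i + r)
  have h7 := Nat.factorial_ne_zero (j + i)
  have h8 := Nat.factorial_ne_zero (l + r)
  field_simp

noncomputable def Fterm (a b c : ℝ) (n x y k j i : ℕ) : ℝ :=
  (n.choose k : ℝ) * c ^ ((k : ℤ) - (n : ℤ))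
    * ((k.choose j : ℝ) * ((n - k).choose i : ℝ)
        * risingFact (a + j) i * risingFact (b + ((k - j : ℕ) : ℝ)) (n - k - i)
        * (x.descFactorial j : ℝ) * (y.descFactorial (k - j) : ℝ))

noncomputable def Gterm (a b c : ℝ) (n x y k j l : ℕ) : ℝ :=
  (n.choose k : ℝ)
    * ((k.choose j : ℝ) * c ^ ((j : ℤ) - (k : ℤ)) * risingFact (a + j) (k - j)
        * (x.descFactorial j : ℝ))
    * (((n - k).choose l : ℝ) * c ^ ((l : ℤ) - ((n - k : ℕ) : ℤ)) * risingFact (b + l) (n - k - l)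
        * (y.descFactorial l : ℝ))

lemma reindex (n j : ℕ) (f : ℕ → ℝ) (h0 : ∀ k, k < j → f k = 0) (h1 : ∀ k, n < k → f k = 0) :
    ∑ k ∈ Finset.range (n + 1), f k = ∑ l ∈ Finset.range (n + 1), f (j + l) := by
  have e1 : ∑ k ∈ Finset.range (n + 1), f k = ∑ k ∈ Finset.Ico j (n + 1), f k := by
    rw [Finset.range_eq_Ico]
    refine (Finset.sum_subset (Finset.Ico_subset_Ico (Nat.zero_le _) le_rfl) ?_).symm
    intro k hk hk2
    rw [Finset.mem_Ico] at hk hk2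
    exact h0 k (by omega)
  have e2 : ∑ k ∈ Finset.Ico j (n + 1), f k = ∑ k ∈ Finset.Ico j (j + (n + 1)), f k := by
    refine Finset.sum_subset (Finset.Ico_subset_Ico le_rfl (by omega)) ?_
    intro k hk hk2
    rw [Finset.mem_Ico] at hk hk2
    exact h1 k (by omega)
  rw [e1, e2, Finset.sum_Ico_eq_sum_range]
  simp

lemma FG (a b c : ℝ) (hc : c ≠ 0) (n x y j l i : ℕ) :
    Fterm a b c n x y (j + l) j i = Gterm a b c n x y (j + i) j l := by
  by_cases h : j + l + i ≤ n
  · unfold Fterm Gterm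
    rw [Nat.add_sub_cancel_left, Nat.add_sub_cancel_left]
    rw [show n - (j + l) - i = n - (j + i) - l by omega]
    have hz : c ^ ((j : ℤ) - ((j + i : ℕ) : ℤ)) * c ^ ((l : ℤ) - ((n - (j + i) : ℕ) : ℤ))
        = c ^ (((j + l : ℕ) : ℤ) - (n : ℤ)) := by
      rw [← zpow_add₀ hc]
      congr 1
      have : ((n - (j + i) : ℕ) : ℤ) = (n : ℤ) - (j : ℤ) - (i : ℤ) := by
        push_cast [Nat.cast_sub (show j + i ≤ n by omega)]; ring
      rw [this]
      push_cast
      ring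
    have hch := choose_swap n j l i h
    rw [← hz]
    linear_combination (c ^ ((j : ℤ) - ((j + i : ℕ) : ℤ)) * c ^ ((l : ℤ) - ((n - (j + i) : ℕ) : ℤ))
      * risingFact (a + j) i * risingFact (b + l) (n - (j + i) - l)
      * (x.descFactorial j : ℝ) * (y.descFactorial l : ℝ)) * hch
  · have hF0 : Fterm a b c n x y (j + l) j i = 0 := by
      unfold Fterm
      rcases Nat.lt_or_ge n (j + l) with h1 | h1
      · rw [Nat.choose_eq_zero_of_lt h1]; simp
      · rw [Nat.choose_eq_zero_of_lt (show n - (j + l) < i by omega)]; simp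
    have hG0 : Gterm a b c n x y (j + i) j l = 0 := by
      unfold Gterm
      rcases Nat.lt_or_ge n (j + i) with h1 | h1
      · rw [Nat.choose_eq_zero_of_lt h1]; simp
      · rw [Nat.choose_eq_zero_of_lt (show n - (j + i) < l by omega)]; simp
    rw [hF0, hG0]

lemma lhs_eq (a b p : ℝ) (n x y : ℕ) :
    meixner n (a + b) p (x + y)
      = ∑ k ∈ Finset.range (n + 1), ∑ j ∈ Finset.range (n + 1), ∑ i ∈ Finset.range (n + 1),
          Fterm a b (1 - 1 / p) n x y k j i := by
  rw [meixner]
  refine Finset.sum_congr rfl fun k hk => ?_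
  rw [Finset.mem_range, Nat.lt_succ_iff] at hk
  calc (n.choose k : ℝ) * (1 - 1 / p) ^ ((k : ℤ) - (n : ℤ)) * risingFact (a + b + k) (n - k)
        * ((x + y).descFactorial k : ℝ)
      = ∑ j ∈ Finset.range (k + 1),
          (n.choose k : ℝ) * (1 - 1 / p) ^ ((k : ℤ) - (n : ℤ)) * risingFact (a + b + k) (n - k)
            * ((k.choose j : ℝ) * (x.descFactorial j : ℝ) * (y.descFactorial (k - j) : ℝ)) := by
        rw [descFact_add_eq, Finset.mul_sum]
    _ = ∑ j ∈ Finset.range (n + 1),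
          (n.choose k : ℝ) * (1 - 1 / p) ^ ((k : ℤ) - (n : ℤ)) * risingFact (a + b + k) (n - k)
            * ((k.choose j : ℝ) * (x.descFactorial j : ℝ) * (y.descFactorial (k - j) : ℝ)) := by
        refine Finset.sum_subset (Finset.range_subset_range.mpr (by omega)) ?_
        intro j _ hj
        rw [Finset.mem_range] at hj
        rw [Nat.choose_eq_zero_of_lt (show k < j by omega)]
        simp
    _ = ∑ j ∈ Finset.range (n + 1), ∑ i ∈ Finset.range (n + 1),
          Fterm a b (1 - 1 / p) n x y k j i := by
        refine Finset.sum_congr rfl fun j hj => ?_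
        rw [Finset.mem_range, Nat.lt_succ_iff] at hj
        by_cases hjk : j ≤ k
        · have hsplit : a + b + (k : ℝ) = (a + (j : ℝ)) + (b + ((k - j : ℕ) : ℝ)) := by
            rw [Nat.cast_sub hjk]; ring
          rw [hsplit, risingFact_add_eq]
          rw [show (∑ i ∈ Finset.range (n - k + 1),
                ((n - k).choose i : ℝ) * risingFact (a + (j : ℝ)) i
                  * risingFact (b + ((k - j : ℕ) : ℝ)) (n - k - i))
              = ∑ i ∈ Finset.range (n + 1),
                ((n - k).choose i : ℝ) * risingFact (a + (j : ℝ)) i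
                  * risingFact (b + ((k - j : ℕ) : ℝ)) (n - k - i) from
            Finset.sum_subset (Finset.range_subset_range.mpr (by omega)) (by
              intro i _ hi
              rw [Finset.mem_range] at hi
              rw [Nat.choose_eq_zero_of_lt (by omega)]
              simp)]
          rw [Finset.mul_sum, Finset.sum_mul]
          refine Finset.sum_congr rfl fun i _ => ?_
          unfold Fterm
          ring
        · rw [Nat.choose_eq_zero_of_lt (show k < j by omega)]
          rw [Finset.sum_eq_zero (fun i _ => by
            unfold Fterm
            rw [Nat.choose_eq_zero_of_lt (show k < j by omega)]
            simp)]
          simp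

lemma rhs_eq (a b p : ℝ) (n x y : ℕ) :
    (∑ k ∈ Finset.range (n + 1), (n.choose k : ℝ) * meixner k a p x * meixner (n - k) b p y)
      = ∑ k ∈ Finset.range (n + 1), ∑ j ∈ Finset.range (n + 1), ∑ l ∈ Finset.range (n + 1),
          Gterm a b (1 - 1 / p) n x y k j l := by
  refine Finset.sum_congr rfl fun k hk => ?_
  rw [Finset.mem_range, Nat.lt_succ_iff] at hk
  rw [meixner, meixner]
  rw [show (∑ j ∈ Finset.range (k + 1),
        (k.choose j : ℝ) * (1 - 1 / p) ^ ((j : ℤ) - (k : ℤ)) * risingFact (a + j) (k - j)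
          * (x.descFactorial j : ℝ))
      = ∑ j ∈ Finset.range (n + 1),
        (k.choose j : ℝ) * (1 - 1 / p) ^ ((j : ℤ) - (k : ℤ)) * risingFact (a + j) (k - j)
          * (x.descFactorial j : ℝ) from
    Finset.sum_subset (Finset.range_subset_range.mpr (by omega)) (by
      intro j _ hj
      rw [Finset.mem_range] at hj
      rw [Nat.choose_eq_zero_of_lt (by omega)]
      simp)]
  rw [show (∑ l ∈ Finset.range (n - k + 1),
        ((n - k).choose l : ℝ) * (1 - 1 / p) ^ ((l : ℤ) - ((n - k : ℕ) : ℤ))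
          * risingFact (b + l) (n - k - l) * (y.descFactorial l : ℝ))
      = ∑ l ∈ Finset.range (n + 1),
        ((n - k).choose l : ℝ) * (1 - 1 / p) ^ ((l : ℤ) - ((n - k : ℕ) : ℤ))
          * risingFact (b + l) (n - k - l) * (y.descFactorial l : ℝ) from
    Finset.sum_subset (Finset.range_subset_range.mpr (by omega)) (by
      intro l _ hl
      rw [Finset.mem_range] at hl
      rw [Nat.choose_eq_zero_of_lt (by omega)]
      simp)]
  rw [mul_assoc, Finset.sum_mul_sum, Finset.mul_sum]
  refine Finset.sum_congr rfl fun j _ => ?_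
  rw [Finset.mul_sum]
  refine Finset.sum_congr rfl fun l _ => ?_
  unfold Gterm
  ring

/-- convolution identity for the monic Meixner polynomials:
`𝒮_n(x+y; a+b; p) = ∑_{k=0}^n C(n,k) 𝒮_k(x;a;p) 𝒮_{n-k}(y;b;p)`. -/
theorem stmt4 (a b p : ℝ) (ha : 0 < a) (hb : 0 < b) (hp : p ∈ Set.Ioo (0 : ℝ) 1)
    (x y n : ℕ) :
    meixner n (a + b) p (x + y)
      = ∑ k ∈ Finset.range (n + 1),
          (n.choose k : ℝ) * meixner k a p x * meixner (n - k) b p y := by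
  obtain ⟨hp0, hp1⟩ := hp
  have hc : (1 - 1 / p : ℝ) ≠ 0 := by
    have h1 : 1 < 1 / p := by rw [lt_div_iff₀ hp0]; linarith
    intro h
    rw [sub_eq_zero] at h
    rw [← h] at h1
    exact lt_irrefl _ h1
  rw [lhs_eq, rhs_eq]
  set c : ℝ := 1 - 1 / p with hcdef
  calc ∑ k ∈ Finset.range (n + 1), ∑ j ∈ Finset.range (n + 1), ∑ i ∈ Finset.range (n + 1),
        Fterm a b c n x y k j i
      = ∑ j ∈ Finset.range (n + 1), ∑ k ∈ Finset.range (n + 1), ∑ i ∈ Finset.range (n + 1),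
          Fterm a b c n x y k j i := Finset.sum_comm
    _ = ∑ j ∈ Finset.range (n + 1), ∑ i ∈ Finset.range (n + 1), ∑ k ∈ Finset.range (n + 1),
          Fterm a b c n x y k j i := Finset.sum_congr rfl fun j _ => Finset.sum_comm
    _ = ∑ j ∈ Finset.range (n + 1), ∑ i ∈ Finset.range (n + 1), ∑ l ∈ Finset.range (n + 1),
          Fterm a b c n x y (j + l) j i := by
        refine Finset.sum_congr rfl fun j _ => Finset.sum_congr rfl fun i _ => ?_
        refine reindex n j _ (fun k hk => ?_) (fun k hk => ?_)
        · simp [Fterm, Nat.choose_eq_zero_of_lt hk]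
        · simp [Fterm, Nat.choose_eq_zero_of_lt hk]
    _ = ∑ j ∈ Finset.range (n + 1), ∑ i ∈ Finset.range (n + 1), ∑ l ∈ Finset.range (n + 1),
          Gterm a b c n x y (j + i) j l := by
        refine Finset.sum_congr rfl fun j _ => Finset.sum_congr rfl fun i _ =>
          Finset.sum_congr rfl fun l _ => ?_
        exact FG a b c hc n x y j l i
    _ = ∑ j ∈ Finset.range (n + 1), ∑ l ∈ Finset.range (n + 1), ∑ i ∈ Finset.range (n + 1),
          Gterm a b c n x y (j + i) j l := Finset.sum_congr rfl fun j _ => Finset.sum_comm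
    _ = ∑ j ∈ Finset.range (n + 1), ∑ l ∈ Finset.range (n + 1), ∑ k ∈ Finset.range (n + 1),
          Gterm a b c n x y k j l := by
        refine Finset.sum_congr rfl fun j _ => Finset.sum_congr rfl fun l _ => ?_
        refine (reindex n j (fun k => Gterm a b c n x y k j l) (fun k hk => ?_) (fun k hk => ?_)).symm
        · simp [Gterm, Nat.choose_eq_zero_of_lt hk]
        · simp [Gterm, Nat.choose_eq_zero_of_lt hk]
    _ = ∑ j ∈ Finset.range (n + 1), ∑ k ∈ Finset.range (n + 1), ∑ l ∈ Finset.range (n + 1),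
          Gterm a b c n x y k j l := Finset.sum_congr rfl fun j _ => Finset.sum_comm
    _ = ∑ k ∈ Finset.range (n + 1), ∑ j ∈ Finset.range (n + 1), ∑ l ∈ Finset.range (n + 1),
          Gterm a b c n x y k j l := Finset.sum_comm
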